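/- The Markov value of the periodic orbit with period 1112122 over the alphabet {1,2}, attained at a letter 2 in position corresponding to \overline{1112^*122}, equals 2·√2026/27 = 3.3341562…; that is, sup over k of λ_k of this periodic sequence equals [2;1,2,2,\overline{1,1,1,2,1,2,2}] + [0;1,1,1,\overline{2,2,1,2,1,1,1}] = 2√2026/27. -/

import Mathlib

open Filter

/-- The `n`-th convergent of the continued fraction `[a 0; a 1, a 2, ...]`. -/
noncomputable def cfConv : ℕ → (ℕ → ℕ) → ℝ
  | 0, a => a 0
  | n+1, a => a 0 + 1 / cfConv n (fun i => a (i+1))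

/-- Value of the infinite continued fraction `[a 0; a 1, a 2, ...]` (limit of convergents). -/
noncomputable def cfVal (a : ℕ → ℕ) : ℝ := limUnder atTop (fun n => cfConv n a)

/-- `λ_k(a) = [a_k; a_{k+1}, …] + [0; a_{k-1}, a_{k-2}, …]`. -/
noncomputable def lam (a : ℤ → ℕ) (k : ℤ) : ℝ :=
  cfVal (fun n => a (k + n)) + (cfVal (fun n => a (k - 1 - n)))⁻¹

/-- The Markov value `m(a) = sup_k λ_k(a)`. -/
noncomputable def markov (a : ℤ → ℕ) : ℝ := ⨆ k : ℤ, lam a k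

/-- The periodic bi-infinite sequence with period the word `w` (`w` at positions `0..len-1`). -/
def periodize (w : List ℕ) : ℤ → ℕ := fun n => w.getD (n % (w.length : ℤ)).toNat 0



/-- apply finite cf word on top of `x` -/
noncomputable def cfApp : List ℕ → ℝ → ℝ
  | [], x => x
  | b :: l, x => b + 1 / cfApp l x

@[simp] lemma cfApp_nil (x : ℝ) : cfApp [] x = x := rfl
@[simp] lemma cfApp_cons (b : ℕ) (l : List ℕ) (x : ℝ) :
    cfApp (b :: l) x = b + 1 / cfApp l x := rfl

lemma cfConv_add (m : ℕ) : ∀ (n : ℕ) (a : ℕ → ℕ),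
    cfConv (m + n) a = cfApp ((List.range m).map a) (cfConv n (fun i => a (i + m))) := by
  induction m with
  | zero => intro n a; simp [cfConv]
  | succ m ih =>
      intro n a
      have h1 : m + 1 + n = (m + n) + 1 := by omega
      rw [h1]
      show (a 0 : ℝ) + 1 / cfConv (m + n) (fun i => a (i+1)) = _
      rw [ih n (fun i => a (i+1))]
      have h2 : (List.range (m+1)).map a = a 0 :: (List.range m).map (fun i => a (i+1)) := by
        rw [List.range_succ_eq_map]
        simp [List.map_map]
      rw [h2, cfApp_cons]
      have h3 : (fun i => a (i + m + 1)) = (fun i => a (i + (m+1))) := by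
        funext i; rw [Nat.add_assoc]
      rw [h3]

lemma cfApp_mem : ∀ (l : List ℕ), l ≠ [] → (∀ b ∈ l, 1 ≤ b ∧ b ≤ 2) →
    ∀ x : ℝ, 1 ≤ x → x ≤ 3 → 4/3 ≤ cfApp l x ∧ cfApp l x ≤ 3 := by
  intro l
  induction l with
  | nil => intro h; exact absurd rfl h
  | cons b l ih =>
      intro _ hb x hx1 hx2
      have hbm := hb b List.mem_cons_self
      rcases List.eq_nil_or_concat l with h | _
      · subst h
        simp only [cfApp_cons, cfApp_nil]
        have h1 : (1:ℝ) ≤ (b:ℝ) := by exact_mod_cast hbm.1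
        have h2 : (b:ℝ) ≤ 2 := by exact_mod_cast hbm.2
        constructor
        · have : (1:ℝ)/3 ≤ 1/x := by
            apply div_le_div_of_nonneg_left <;> linarith
          linarith
        · have : 1/x ≤ 1 := by
            rw [div_le_one] <;> linarith
          linarith
      · have hl : l ≠ [] := by rintro rfl; simp_all
        have hlm : ∀ c ∈ l, 1 ≤ c ∧ c ≤ 2 := fun c hc => hb c (List.mem_cons_of_mem _ hc)
        obtain ⟨h1, h2⟩ := ih hl hlm x hx1 hx2
        simp only [cfApp_cons]
        have hb1 : (1:ℝ) ≤ (b:ℝ) := by exact_mod_cast hbm.1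
        have hb2 : (b:ℝ) ≤ 2 := by exact_mod_cast hbm.2
        constructor
        · have : (1:ℝ)/3 ≤ 1 / cfApp l x := by
            apply div_le_div_of_nonneg_left <;> linarith
          linarith
        · have : 1 / cfApp l x ≤ 3/4 := by
            rw [div_le_div_iff₀] <;> linarith
          linarith

lemma cfApp_lip1 : ∀ (l : List ℕ), (∀ b ∈ l, 1 ≤ b ∧ b ≤ 2) →
    ∀ x y : ℝ, 1 ≤ x → x ≤ 3 → 1 ≤ y → y ≤ 3 →
    |cfApp l x - cfApp l y| ≤ |x - y| := by
  intro l
  induction l with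
  | nil => intro _ x y _ _ _ _; simp
  | cons b l ih =>
      intro hb x y hx1 hx2 hy1 hy2
      have hlm : ∀ c ∈ l, 1 ≤ c ∧ c ≤ 2 := fun c hc => hb c (List.mem_cons_of_mem _ hc)
      have hu : 1 ≤ cfApp l x ∧ cfApp l x ≤ 3 := by
        rcases List.eq_nil_or_concat l with h | _
        · subst h; exact ⟨hx1, hx2⟩
        · have hl : l ≠ [] := by rintro rfl; simp_all
          obtain ⟨h1, h2⟩ := cfApp_mem l hl hlm x hx1 hx2
          exact ⟨by linarith, h2⟩
      have hv : 1 ≤ cfApp l y ∧ cfApp l y ≤ 3 := by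
        rcases List.eq_nil_or_concat l with h | _
        · subst h; exact ⟨hy1, hy2⟩
        · have hl : l ≠ [] := by rintro rfl; simp_all
          obtain ⟨h1, h2⟩ := cfApp_mem l hl hlm y hy1 hy2
          exact ⟨by linarith, h2⟩
      have hih := ih hlm x y hx1 hx2 hy1 hy2
      simp only [cfApp_cons]
      have hne1 : cfApp l x ≠ 0 := by linarith [hu.1]
      have hne2 : cfApp l y ≠ 0 := by linarith [hv.1]
      have key : (b:ℝ) + 1 / cfApp l x - ((b:ℝ) + 1 / cfApp l y)
          = (cfApp l y - cfApp l x) / (cfApp l x * cfApp l y) := by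
        field_simp; ring
      rw [key, abs_div, abs_sub_comm]
      have hd : 1 ≤ |cfApp l x * cfApp l y| := by
        rw [abs_mul, abs_of_pos (by linarith [hu.1]), abs_of_pos (by linarith [hv.1])]
        nlinarith [hu.1, hv.1]
      calc |cfApp l x - cfApp l y| / |cfApp l x * cfApp l y|
          ≤ |cfApp l x - cfApp l y| / 1 := by
            apply div_le_div_of_nonneg_left (abs_nonneg _) one_pos hd
        _ = |cfApp l x - cfApp l y| := by ring
        _ ≤ |x - y| := hih

lemma cfApp_lip (b c : ℕ) (l : List ℕ) (hb : ∀ d ∈ b :: c :: l, 1 ≤ d ∧ d ≤ 2)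
    (x y : ℝ) (hx1 : 1 ≤ x) (hx2 : x ≤ 3) (hy1 : 1 ≤ y) (hy2 : y ≤ 3) :
    |cfApp (b :: c :: l) x - cfApp (b :: c :: l) y| ≤ 9/16 * |x - y| := by
  have hlm : ∀ d ∈ c :: l, 1 ≤ d ∧ d ≤ 2 := fun d hd => hb d (List.mem_cons_of_mem _ hd)
  obtain ⟨hu1, hu2⟩ := cfApp_mem (c :: l) (by simp) hlm x hx1 hx2
  obtain ⟨hv1, hv2⟩ := cfApp_mem (c :: l) (by simp) hlm y hy1 hy2
  have hih := cfApp_lip1 (c :: l) hlm x y hx1 hx2 hy1 hy2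
  set u := cfApp (c :: l) x with hudef
  set v := cfApp (c :: l) y with hvdef
  have key : cfApp (b :: c :: l) x - cfApp (b :: c :: l) y = (v - u) / (u * v) := by
    have e1 : cfApp (b :: c :: l) x = b + 1 / u := rfl
    have e2 : cfApp (b :: c :: l) y = b + 1 / v := rfl
    rw [e1, e2]
    field_simp
    ring
  rw [key, abs_div, abs_sub_comm]
  have hd : 16/9 ≤ |u * v| := by
    rw [abs_mul, abs_of_pos (by linarith), abs_of_pos (by linarith)]
    nlinarith
  calc |u - v| / |u * v| ≤ |u - v| / (16/9) := by
        apply div_le_div_of_nonneg_left (abs_nonneg _) (by norm_num) hd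
    _ = 9/16 * |u - v| := by ring
    _ ≤ 9/16 * |x - y| := by linarith

lemma cfConv_mem : ∀ (n : ℕ) (a : ℕ → ℕ), (∀ i, 1 ≤ a i ∧ a i ≤ 2) →
    1 ≤ cfConv n a ∧ cfConv n a ≤ 3 := by
  intro n
  induction n with
  | zero =>
      intro a ha
      have := ha 0
      constructor
      · show (1:ℝ) ≤ (a 0 : ℝ); exact_mod_cast this.1
      · show (a 0 : ℝ) ≤ 3; exact_mod_cast le_trans this.2 (by norm_num)
  | succ n ih =>
      intro a ha
      obtain ⟨h1, h2⟩ := ih (fun i => a (i+1)) (fun i => ha (i+1))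
      have hb := ha 0
      have hb1 : (1:ℝ) ≤ (a 0 : ℝ) := by exact_mod_cast hb.1
      have hb2 : (a 0:ℝ) ≤ 2 := by exact_mod_cast hb.2
      show 1 ≤ (a 0:ℝ) + 1 / cfConv n (fun i => a (i+1)) ∧
        (a 0:ℝ) + 1 / cfConv n (fun i => a (i+1)) ≤ 3
      constructor
      · have : 0 < 1 / cfConv n (fun i => a (i+1)) := by positivity
        linarith
      · have : 1 / cfConv n (fun i => a (i+1)) ≤ 1 := by
          rw [div_le_one] <;> linarith
        linarith

/-- Main: value of a periodic continued fraction is the fixed point. -/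
lemma cfVal_eq (a : ℕ → ℕ) (p : ℕ) (hp : 2 ≤ p)
    (hbd : ∀ i, 1 ≤ a i ∧ a i ≤ 2) (hper : ∀ i, a (i + p) = a i)
    (x : ℝ) (hfix : cfApp ((List.range p).map a) x = x)
    (hx1 : 1 ≤ x) (hx2 : x ≤ 3) : cfVal a = x := by
  obtain ⟨b, c, l, hw⟩ : ∃ b c l, (List.range p).map a = b :: c :: l := by
    cases h : (List.range p).map a with
    | nil =>
        exfalso; have := congrArg List.length h; simp at this; omega
    | cons b t =>
        cases t with
        | nil => exfalso; have := congrArg List.length h; simp at this; omega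
        | cons c l => exact ⟨b, c, l, rfl⟩
  have hwm : ∀ d ∈ b :: c :: l, 1 ≤ d ∧ d ≤ 2 := by
    intro d hd
    rw [← hw] at hd
    simp only [List.mem_map] at hd
    obtain ⟨i, _, rfl⟩ := hd
    exact hbd i
  rw [hw] at hfix
  -- iterate bound
  have hshift : (fun i => a (i + p)) = a := funext hper
  have hiter : ∀ m r, cfConv (p * m + r) a = (cfApp (b :: c :: l))^[m] (cfConv r a) := by
    intro m
    induction m with
    | zero => intro r; simp
    | succ m ih =>
        intro r
        have h1 : p * (m + 1) + r = p + (p * m + r) := by ring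
        rw [h1, cfConv_add p (p * m + r) a, hshift, hw, ih r,
          Function.iterate_succ_apply']
  have hxfix : ∀ m, (cfApp (b :: c :: l))^[m] x = x := fun m => Function.iterate_fixed hfix m
  have hmem : ∀ (t : ℝ), 1 ≤ t → t ≤ 3 → ∀ m, 1 ≤ (cfApp (b::c::l))^[m] t ∧ (cfApp (b::c::l))^[m] t ≤ 3 := by
    intro t ht1 ht2 m
    induction m with
    | zero => simpa using ⟨ht1, ht2⟩
    | succ m ih =>
        rw [Function.iterate_succ_apply']
        obtain ⟨h1, h2⟩ := cfApp_mem (b::c::l) (by simp) hwm _ ih.1 ih.2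
        exact ⟨by linarith, h2⟩
  have hbound : ∀ (t : ℝ), 1 ≤ t → t ≤ 3 → ∀ m,
      |(cfApp (b::c::l))^[m] t - x| ≤ (9/16)^m * 2 := by
    intro t ht1 ht2 m
    induction m with
    | zero =>
        simp only [Function.iterate_zero, id, pow_zero, one_mul]
        rw [abs_sub_le_iff]; constructor <;> linarith
    | succ m ih =>
        rw [Function.iterate_succ_apply']
        have hm := hmem t ht1 ht2 m
        calc |cfApp (b::c::l) ((cfApp (b::c::l))^[m] t) - x|
            = |cfApp (b::c::l) ((cfApp (b::c::l))^[m] t) - cfApp (b::c::l) x| := by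
              rw [hfix]
          _ ≤ 9/16 * |(cfApp (b::c::l))^[m] t - x| :=
              cfApp_lip b c l hwm _ _ hm.1 hm.2 hx1 hx2
          _ ≤ 9/16 * ((9/16)^m * 2) := by linarith [ih]
          _ = (9/16)^(m+1) * 2 := by ring
  have hppos : 0 < p := by omega
  have hdiv : Tendsto (fun n : ℕ => n / p) atTop atTop := by
    apply tendsto_atTop_atTop.2
    intro m
    exact ⟨p * m, fun n hn => Nat.le_div_iff_mul_le hppos |>.2 (by nlinarith)⟩
  have hgeo : Tendsto (fun n : ℕ => (9/16 : ℝ)^(n / p) * 2) atTop (nhds 0) := by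
    have h1 : Tendsto (fun m : ℕ => (9/16 : ℝ)^m) atTop (nhds 0) :=
      tendsto_pow_atTop_nhds_zero_of_lt_one (by norm_num) (by norm_num)
    have := (h1.comp hdiv).mul_const 2
    simpa using this
  have htend : Tendsto (fun n => cfConv n a) atTop (nhds x) := by
    rw [← tendsto_sub_nhds_zero_iff]
    apply squeeze_zero_norm (a := fun n : ℕ => (9/16 : ℝ)^(n / p) * 2) _ hgeo
    intro n
    have hn : p * (n / p) + n % p = n := by
      exact Nat.div_add_mod n p
    have hc := cfConv_mem (n % p) a hbd
    have := hbound (cfConv (n % p) a) hc.1 hc.2 (n / p)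
    rw [← hiter (n / p) (n % p), hn] at this
    simpa using this
  exact htend.limUnder_eq

/-- abbreviation for √2026 -/
noncomputable def rt : ℝ := Real.sqrt 2026

lemma rt_sq : rt^2 = 2026 := Real.sq_sqrt (by norm_num)
lemma rt_gt : (45:ℝ) < rt := by
  have : (45:ℝ) = Real.sqrt (45^2) := by
    rw [Real.sqrt_sq] ; norm_num
  rw [this]
  apply Real.sqrt_lt_sqrt (by norm_num)
  norm_num
lemma rt_lt : rt < 46 := by
  have : (46:ℝ) = Real.sqrt (46^2) := by
    rw [Real.sqrt_sq] ; norm_num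
  rw [this]
  apply Real.sqrt_lt_sqrt (by norm_num)
  norm_num

lemma cfstep (s b a1 g1 a2 g2 : ℝ) (hs : s^2 = 2026)
    (h1 : g1*b = a1+a2) (h2 : g1*b*a2 + g1*g2 = a1*a2 + 2026)
    (hg1 : g1 ≠ 0) (hg2 : g2 ≠ 0) (ha2 : 0 < a2 + s) :
    b + 1/((a2+s)/g2) = (a1+s)/g1 := by
  rw [one_div_div]
  rw [add_div' _ _ _ (ne_of_gt ha2), div_eq_div_iff (ne_of_gt ha2) hg1]
  linear_combination s*h1 + h2 - hs

lemma lamval (s a cc qq : ℝ) (hs : s^2 = 2026) (h : cc*qq = 2026 - a^2)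
    (hc : cc ≠ 0) (hq : qq ≠ 0) (hpos : 0 < a + s) :
    (a+s)/cc + ((a+s)/qq)⁻¹ = 2*s/cc := by
  rw [inv_div, div_add_div _ _ hc (ne_of_gt hpos), div_eq_div_iff (by positivity) hc]
  ring_nf
  linear_combination cc*h - cc*hs

lemma stepX0 : (2:ℝ) + 1/(((26:ℝ) + rt)/50) = ((28:ℝ) + rt)/27 := by
  exact cfstep rt 2 28 27 26 50 rt_sq (by norm_num) (by norm_num)
    (by norm_num) (by norm_num) (by linarith [rt_gt])
lemma stepY0 : (2:ℝ) + 1/(((28:ℝ) + rt)/46) = ((26:ℝ) + rt)/27 := by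
  exact cfstep rt 2 26 27 28 46 rt_sq (by norm_num) (by norm_num)
    (by norm_num) (by norm_num) (by linarith [rt_gt])

lemma stepX1 : (1:ℝ) + 1/(((24:ℝ) + rt)/29) = ((26:ℝ) + rt)/50 := by
  exact cfstep rt 1 26 50 24 29 rt_sq (by norm_num) (by norm_num)
    (by norm_num) (by norm_num) (by linarith [rt_gt])
lemma stepY1 : (1:ℝ) + 1/(((26:ℝ) + rt)/27) = ((24:ℝ) + rt)/50 := by
  exact cfstep rt 1 24 50 26 27 rt_sq (by norm_num) (by norm_num)
    (by norm_num) (by norm_num) (by linarith [rt_gt])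

lemma stepX2 : (2:ℝ) + 1/(((34:ℝ) + rt)/30) = ((24:ℝ) + rt)/29 := by
  exact cfstep rt 2 24 29 34 30 rt_sq (by norm_num) (by norm_num)
    (by norm_num) (by norm_num) (by linarith [rt_gt])
lemma stepY2 : (2:ℝ) + 1/(((24:ℝ) + rt)/50) = ((34:ℝ) + rt)/29 := by
  exact cfstep rt 2 34 29 24 50 rt_sq (by norm_num) (by norm_num)
    (by norm_num) (by norm_num) (by linarith [rt_gt])

lemma stepX3 : (2:ℝ) + 1/(((26:ℝ) + rt)/45) = ((34:ℝ) + rt)/30 := by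
  exact cfstep rt 2 34 30 26 45 rt_sq (by norm_num) (by norm_num)
    (by norm_num) (by norm_num) (by linarith [rt_gt])
lemma stepY3 : (2:ℝ) + 1/(((34:ℝ) + rt)/29) = ((26:ℝ) + rt)/30 := by
  exact cfstep rt 2 26 30 34 29 rt_sq (by norm_num) (by norm_num)
    (by norm_num) (by norm_num) (by linarith [rt_gt])

lemma stepX4 : (1:ℝ) + 1/(((19:ℝ) + rt)/37) = ((26:ℝ) + rt)/45 := by
  exact cfstep rt 1 26 45 19 37 rt_sq (by norm_num) (by norm_num)
    (by norm_num) (by norm_num) (by linarith [rt_gt])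
lemma stepY4 : (1:ℝ) + 1/(((26:ℝ) + rt)/30) = ((19:ℝ) + rt)/45 := by
  exact cfstep rt 1 19 45 26 30 rt_sq (by norm_num) (by norm_num)
    (by norm_num) (by norm_num) (by linarith [rt_gt])

lemma stepX5 : (1:ℝ) + 1/(((18:ℝ) + rt)/46) = ((19:ℝ) + rt)/37 := by
  exact cfstep rt 1 19 37 18 46 rt_sq (by norm_num) (by norm_num)
    (by norm_num) (by norm_num) (by linarith [rt_gt])
lemma stepY5 : (1:ℝ) + 1/(((19:ℝ) + rt)/45) = ((18:ℝ) + rt)/37 := by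
  exact cfstep rt 1 18 37 19 45 rt_sq (by norm_num) (by norm_num)
    (by norm_num) (by norm_num) (by linarith [rt_gt])

lemma stepX6 : (1:ℝ) + 1/(((28:ℝ) + rt)/27) = ((18:ℝ) + rt)/46 := by
  exact cfstep rt 1 18 46 28 27 rt_sq (by norm_num) (by norm_num)
    (by norm_num) (by norm_num) (by linarith [rt_gt])
lemma stepY6 : (1:ℝ) + 1/(((18:ℝ) + rt)/37) = ((28:ℝ) + rt)/46 := by
  exact cfstep rt 1 28 46 18 37 rt_sq (by norm_num) (by norm_num)
    (by norm_num) (by norm_num) (by linarith [rt_gt])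

abbrev A : ℤ → ℕ := periodize [2,1,2,2,1,1,1]

lemma A_bd : ∀ m : ℤ, 1 ≤ A m ∧ A m ≤ 2 := by
  intro m
  have h0 : 0 ≤ m % 7 := Int.emod_nonneg m (by norm_num)
  have h1 : m % 7 < 7 := Int.emod_lt_of_pos m (by norm_num)
  unfold A periodize
  simp only [List.length_cons, List.length_nil]
  interval_cases h : (m % 7) <;> simp_all

lemma A_per : ∀ (m t : ℤ), A (m + 7*t) = A m := by
  intro m t
  unfold A periodize
  norm_num [Int.add_mul_emod_self_left]

lemma A_shift_add (z : ℤ) (i : ℕ) : A (z + ((i+7 : ℕ) : ℤ)) = A (z + (i : ℕ)) := by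
  push_cast
  rw [show z + ((i:ℤ)+7) = (z + i) + 7*1 by ring]
  exact A_per _ 1

lemma A_shift_sub (z : ℤ) (i : ℕ) : A (z - ((i+7 : ℕ) : ℤ)) = A (z - (i : ℕ)) := by
  push_cast
  rw [show z - ((i:ℤ)+7) = (z - i) + 7*(-1) by ring]
  exact A_per _ (-1)

lemma fixX0 : cfApp [2, 1, 2, 2, 1, 1, 1] (((28:ℝ) + rt)/27) = ((28:ℝ) + rt)/27 := by
  simp only [cfApp_cons, cfApp_nil, Nat.cast_ofNat, Nat.cast_one]
  rw [stepX6, stepX5, stepX4, stepX3, stepX2, stepX1, stepX0]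
lemma fixY0 : cfApp [1, 1, 1, 2, 2, 1, 2] (((28:ℝ) + rt)/46) = ((28:ℝ) + rt)/46 := by
  simp only [cfApp_cons, cfApp_nil, Nat.cast_ofNat, Nat.cast_one]
  rw [stepY0, stepY1, stepY2, stepY3, stepY4, stepY5, stepY6]

lemma fixX1 : cfApp [1, 2, 2, 1, 1, 1, 2] (((26:ℝ) + rt)/50) = ((26:ℝ) + rt)/50 := by
  simp only [cfApp_cons, cfApp_nil, Nat.cast_ofNat, Nat.cast_one]
  rw [stepX0, stepX6, stepX5, stepX4, stepX3, stepX2, stepX1]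
lemma fixY1 : cfApp [2, 1, 1, 1, 2, 2, 1] (((26:ℝ) + rt)/27) = ((26:ℝ) + rt)/27 := by
  simp only [cfApp_cons, cfApp_nil, Nat.cast_ofNat, Nat.cast_one]
  rw [stepY1, stepY2, stepY3, stepY4, stepY5, stepY6, stepY0]

lemma fixX2 : cfApp [2, 2, 1, 1, 1, 2, 1] (((24:ℝ) + rt)/29) = ((24:ℝ) + rt)/29 := by
  simp only [cfApp_cons, cfApp_nil, Nat.cast_ofNat, Nat.cast_one]
  rw [stepX1, stepX0, stepX6, stepX5, stepX4, stepX3, stepX2]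
lemma fixY2 : cfApp [1, 2, 1, 1, 1, 2, 2] (((24:ℝ) + rt)/50) = ((24:ℝ) + rt)/50 := by
  simp only [cfApp_cons, cfApp_nil, Nat.cast_ofNat, Nat.cast_one]
  rw [stepY2, stepY3, stepY4, stepY5, stepY6, stepY0, stepY1]

lemma fixX3 : cfApp [2, 1, 1, 1, 2, 1, 2] (((34:ℝ) + rt)/30) = ((34:ℝ) + rt)/30 := by
  simp only [cfApp_cons, cfApp_nil, Nat.cast_ofNat, Nat.cast_one]
  rw [stepX2, stepX1, stepX0, stepX6, stepX5, stepX4, stepX3]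
lemma fixY3 : cfApp [2, 1, 2, 1, 1, 1, 2] (((34:ℝ) + rt)/29) = ((34:ℝ) + rt)/29 := by
  simp only [cfApp_cons, cfApp_nil, Nat.cast_ofNat, Nat.cast_one]
  rw [stepY3, stepY4, stepY5, stepY6, stepY0, stepY1, stepY2]

lemma fixX4 : cfApp [1, 1, 1, 2, 1, 2, 2] (((26:ℝ) + rt)/45) = ((26:ℝ) + rt)/45 := by
  simp only [cfApp_cons, cfApp_nil, Nat.cast_ofNat, Nat.cast_one]
  rw [stepX3, stepX2, stepX1, stepX0, stepX6, stepX5, stepX4]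
lemma fixY4 : cfApp [2, 2, 1, 2, 1, 1, 1] (((26:ℝ) + rt)/30) = ((26:ℝ) + rt)/30 := by
  simp only [cfApp_cons, cfApp_nil, Nat.cast_ofNat, Nat.cast_one]
  rw [stepY4, stepY5, stepY6, stepY0, stepY1, stepY2, stepY3]

lemma fixX5 : cfApp [1, 1, 2, 1, 2, 2, 1] (((19:ℝ) + rt)/37) = ((19:ℝ) + rt)/37 := by
  simp only [cfApp_cons, cfApp_nil, Nat.cast_ofNat, Nat.cast_one]
  rw [stepX4, stepX3, stepX2, stepX1, stepX0, stepX6, stepX5]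
lemma fixY5 : cfApp [1, 2, 2, 1, 2, 1, 1] (((19:ℝ) + rt)/45) = ((19:ℝ) + rt)/45 := by
  simp only [cfApp_cons, cfApp_nil, Nat.cast_ofNat, Nat.cast_one]
  rw [stepY5, stepY6, stepY0, stepY1, stepY2, stepY3, stepY4]

lemma fixX6 : cfApp [1, 2, 1, 2, 2, 1, 1] (((18:ℝ) + rt)/46) = ((18:ℝ) + rt)/46 := by
  simp only [cfApp_cons, cfApp_nil, Nat.cast_ofNat, Nat.cast_one]
  rw [stepX5, stepX4, stepX3, stepX2, stepX1, stepX0, stepX6]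
lemma fixY6 : cfApp [1, 1, 2, 2, 1, 2, 1] (((18:ℝ) + rt)/37) = ((18:ℝ) + rt)/37 := by
  simp only [cfApp_cons, cfApp_nil, Nat.cast_ofNat, Nat.cast_one]
  rw [stepY6, stepY0, stepY1, stepY2, stepY3, stepY4, stepY5]

lemma valX0 : cfVal (fun n : ℕ => A ((0:ℤ) + n)) = ((28:ℝ) + rt)/27 := by
  apply cfVal_eq _ 7 (by norm_num) (fun i => A_bd _)
  · intro i
    exact A_shift_add 0 i
  · rw [show (List.range 7).map (fun i : ℕ => A ((0:ℤ) + i)) = [2, 1, 2, 2, 1, 1, 1] from by decide]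
    exact fixX0
  · rw [le_div_iff₀ (by norm_num : (0:ℝ) < 27)]; linarith [rt_gt]
  · rw [div_le_iff₀ (by norm_num : (0:ℝ) < 27)]; linarith [rt_lt]
lemma valY0 : cfVal (fun n : ℕ => A ((0:ℤ) - 1 - n)) = ((28:ℝ) + rt)/46 := by
  apply cfVal_eq _ 7 (by norm_num) (fun i => A_bd _)
  · intro i
    exact A_shift_sub ((0 : ℤ) - 1) i
  · rw [show (List.range 7).map (fun i : ℕ => A ((0:ℤ) - 1 - i)) = [1, 1, 1, 2, 2, 1, 2] from by decide]
    exact fixY0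
  · rw [le_div_iff₀ (by norm_num : (0:ℝ) < 46)]; linarith [rt_gt]
  · rw [div_le_iff₀ (by norm_num : (0:ℝ) < 46)]; linarith [rt_lt]

lemma valX1 : cfVal (fun n : ℕ => A ((1:ℤ) + n)) = ((26:ℝ) + rt)/50 := by
  apply cfVal_eq _ 7 (by norm_num) (fun i => A_bd _)
  · intro i
    exact A_shift_add 1 i
  · rw [show (List.range 7).map (fun i : ℕ => A ((1:ℤ) + i)) = [1, 2, 2, 1, 1, 1, 2] from by decide]
    exact fixX1
  · rw [le_div_iff₀ (by norm_num : (0:ℝ) < 50)]; linarith [rt_gt]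
  · rw [div_le_iff₀ (by norm_num : (0:ℝ) < 50)]; linarith [rt_lt]
lemma valY1 : cfVal (fun n : ℕ => A ((1:ℤ) - 1 - n)) = ((26:ℝ) + rt)/27 := by
  apply cfVal_eq _ 7 (by norm_num) (fun i => A_bd _)
  · intro i
    exact A_shift_sub ((1 : ℤ) - 1) i
  · rw [show (List.range 7).map (fun i : ℕ => A ((1:ℤ) - 1 - i)) = [2, 1, 1, 1, 2, 2, 1] from by decide]
    exact fixY1
  · rw [le_div_iff₀ (by norm_num : (0:ℝ) < 27)]; linarith [rt_gt]
  · rw [div_le_iff₀ (by norm_num : (0:ℝ) < 27)]; linarith [rt_lt]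

lemma valX2 : cfVal (fun n : ℕ => A ((2:ℤ) + n)) = ((24:ℝ) + rt)/29 := by
  apply cfVal_eq _ 7 (by norm_num) (fun i => A_bd _)
  · intro i
    exact A_shift_add 2 i
  · rw [show (List.range 7).map (fun i : ℕ => A ((2:ℤ) + i)) = [2, 2, 1, 1, 1, 2, 1] from by decide]
    exact fixX2
  · rw [le_div_iff₀ (by norm_num : (0:ℝ) < 29)]; linarith [rt_gt]
  · rw [div_le_iff₀ (by norm_num : (0:ℝ) < 29)]; linarith [rt_lt]
lemma valY2 : cfVal (fun n : ℕ => A ((2:ℤ) - 1 - n)) = ((24:ℝ) + rt)/50 := by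
  apply cfVal_eq _ 7 (by norm_num) (fun i => A_bd _)
  · intro i
    exact A_shift_sub ((2 : ℤ) - 1) i
  · rw [show (List.range 7).map (fun i : ℕ => A ((2:ℤ) - 1 - i)) = [1, 2, 1, 1, 1, 2, 2] from by decide]
    exact fixY2
  · rw [le_div_iff₀ (by norm_num : (0:ℝ) < 50)]; linarith [rt_gt]
  · rw [div_le_iff₀ (by norm_num : (0:ℝ) < 50)]; linarith [rt_lt]

lemma valX3 : cfVal (fun n : ℕ => A ((3:ℤ) + n)) = ((34:ℝ) + rt)/30 := by
  apply cfVal_eq _ 7 (by norm_num) (fun i => A_bd _)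
  · intro i
    exact A_shift_add 3 i
  · rw [show (List.range 7).map (fun i : ℕ => A ((3:ℤ) + i)) = [2, 1, 1, 1, 2, 1, 2] from by decide]
    exact fixX3
  · rw [le_div_iff₀ (by norm_num : (0:ℝ) < 30)]; linarith [rt_gt]
  · rw [div_le_iff₀ (by norm_num : (0:ℝ) < 30)]; linarith [rt_lt]
lemma valY3 : cfVal (fun n : ℕ => A ((3:ℤ) - 1 - n)) = ((34:ℝ) + rt)/29 := by
  apply cfVal_eq _ 7 (by norm_num) (fun i => A_bd _)
  · intro i
    exact A_shift_sub ((3 : ℤ) - 1) i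
  · rw [show (List.range 7).map (fun i : ℕ => A ((3:ℤ) - 1 - i)) = [2, 1, 2, 1, 1, 1, 2] from by decide]
    exact fixY3
  · rw [le_div_iff₀ (by norm_num : (0:ℝ) < 29)]; linarith [rt_gt]
  · rw [div_le_iff₀ (by norm_num : (0:ℝ) < 29)]; linarith [rt_lt]

lemma valX4 : cfVal (fun n : ℕ => A ((4:ℤ) + n)) = ((26:ℝ) + rt)/45 := by
  apply cfVal_eq _ 7 (by norm_num) (fun i => A_bd _)
  · intro i
    exact A_shift_add 4 i
  · rw [show (List.range 7).map (fun i : ℕ => A ((4:ℤ) + i)) = [1, 1, 1, 2, 1, 2, 2] from by decide]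
    exact fixX4
  · rw [le_div_iff₀ (by norm_num : (0:ℝ) < 45)]; linarith [rt_gt]
  · rw [div_le_iff₀ (by norm_num : (0:ℝ) < 45)]; linarith [rt_lt]
lemma valY4 : cfVal (fun n : ℕ => A ((4:ℤ) - 1 - n)) = ((26:ℝ) + rt)/30 := by
  apply cfVal_eq _ 7 (by norm_num) (fun i => A_bd _)
  · intro i
    exact A_shift_sub ((4 : ℤ) - 1) i
  · rw [show (List.range 7).map (fun i : ℕ => A ((4:ℤ) - 1 - i)) = [2, 2, 1, 2, 1, 1, 1] from by decide]
    exact fixY4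
  · rw [le_div_iff₀ (by norm_num : (0:ℝ) < 30)]; linarith [rt_gt]
  · rw [div_le_iff₀ (by norm_num : (0:ℝ) < 30)]; linarith [rt_lt]

lemma valX5 : cfVal (fun n : ℕ => A ((5:ℤ) + n)) = ((19:ℝ) + rt)/37 := by
  apply cfVal_eq _ 7 (by norm_num) (fun i => A_bd _)
  · intro i
    exact A_shift_add 5 i
  · rw [show (List.range 7).map (fun i : ℕ => A ((5:ℤ) + i)) = [1, 1, 2, 1, 2, 2, 1] from by decide]
    exact fixX5
  · rw [le_div_iff₀ (by norm_num : (0:ℝ) < 37)]; linarith [rt_gt]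
  · rw [div_le_iff₀ (by norm_num : (0:ℝ) < 37)]; linarith [rt_lt]
lemma valY5 : cfVal (fun n : ℕ => A ((5:ℤ) - 1 - n)) = ((19:ℝ) + rt)/45 := by
  apply cfVal_eq _ 7 (by norm_num) (fun i => A_bd _)
  · intro i
    exact A_shift_sub ((5 : ℤ) - 1) i
  · rw [show (List.range 7).map (fun i : ℕ => A ((5:ℤ) - 1 - i)) = [1, 2, 2, 1, 2, 1, 1] from by decide]
    exact fixY5
  · rw [le_div_iff₀ (by norm_num : (0:ℝ) < 45)]; linarith [rt_gt]
  · rw [div_le_iff₀ (by norm_num : (0:ℝ) < 45)]; linarith [rt_lt]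

lemma valX6 : cfVal (fun n : ℕ => A ((6:ℤ) + n)) = ((18:ℝ) + rt)/46 := by
  apply cfVal_eq _ 7 (by norm_num) (fun i => A_bd _)
  · intro i
    exact A_shift_add 6 i
  · rw [show (List.range 7).map (fun i : ℕ => A ((6:ℤ) + i)) = [1, 2, 1, 2, 2, 1, 1] from by decide]
    exact fixX6
  · rw [le_div_iff₀ (by norm_num : (0:ℝ) < 46)]; linarith [rt_gt]
  · rw [div_le_iff₀ (by norm_num : (0:ℝ) < 46)]; linarith [rt_lt]
lemma valY6 : cfVal (fun n : ℕ => A ((6:ℤ) - 1 - n)) = ((18:ℝ) + rt)/37 := by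
  apply cfVal_eq _ 7 (by norm_num) (fun i => A_bd _)
  · intro i
    exact A_shift_sub ((6 : ℤ) - 1) i
  · rw [show (List.range 7).map (fun i : ℕ => A ((6:ℤ) - 1 - i)) = [1, 1, 2, 2, 1, 2, 1] from by decide]
    exact fixY6
  · rw [le_div_iff₀ (by norm_num : (0:ℝ) < 37)]; linarith [rt_gt]
  · rw [div_le_iff₀ (by norm_num : (0:ℝ) < 37)]; linarith [rt_lt]

lemma lamA0 : lam A 0 = 2*rt/27 := by
  unfold lam
  rw [valX0, valY0]
  exact lamval rt 28 27 46 rt_sq (by norm_num) (by norm_num) (by norm_num)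
    (by linarith [rt_gt])

lemma lamA1 : lam A 1 = 2*rt/50 := by
  unfold lam
  rw [valX1, valY1]
  exact lamval rt 26 50 27 rt_sq (by norm_num) (by norm_num) (by norm_num)
    (by linarith [rt_gt])

lemma lamA2 : lam A 2 = 2*rt/29 := by
  unfold lam
  rw [valX2, valY2]
  exact lamval rt 24 29 50 rt_sq (by norm_num) (by norm_num) (by norm_num)
    (by linarith [rt_gt])

lemma lamA3 : lam A 3 = 2*rt/30 := by
  unfold lam
  rw [valX3, valY3]
  exact lamval rt 34 30 29 rt_sq (by norm_num) (by norm_num) (by norm_num)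
    (by linarith [rt_gt])

lemma lamA4 : lam A 4 = 2*rt/45 := by
  unfold lam
  rw [valX4, valY4]
  exact lamval rt 26 45 30 rt_sq (by norm_num) (by norm_num) (by norm_num)
    (by linarith [rt_gt])

lemma lamA5 : lam A 5 = 2*rt/37 := by
  unfold lam
  rw [valX5, valY5]
  exact lamval rt 19 37 45 rt_sq (by norm_num) (by norm_num) (by norm_num)
    (by linarith [rt_gt])

lemma lamA6 : lam A 6 = 2*rt/46 := by
  unfold lam
  rw [valX6, valY6]
  exact lamval rt 18 46 37 rt_sq (by norm_num) (by norm_num) (by norm_num)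
    (by linarith [rt_gt])

lemma lam_mod (k : ℤ) : lam A k = lam A (k % 7) := by
  unfold lam
  have h1 : (fun n : ℕ => A (k + n)) = (fun n : ℕ => A (k % 7 + n)) := by
    funext n
    rw [show k + (n:ℤ) = (k % 7 + n) + 7 * (k / 7) by omega]
    exact A_per _ _
  have h2 : (fun n : ℕ => A (k - 1 - n)) = (fun n : ℕ => A (k % 7 - 1 - n)) := by
    funext n
    rw [show k - 1 - (n:ℤ) = (k % 7 - 1 - n) + 7 * (k / 7) by omega]
    exact A_per _ _
  rw [h1, h2]

lemma lam_upper (k : ℤ) : lam A k ≤ 2*rt/27 := by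
  have hr : 0 < rt := by linarith [rt_gt]
  have key : ∀ (cc : ℝ), 27 ≤ cc → 2*rt/cc ≤ 2*rt/27 := by
    intro cc hcc
    apply div_le_div_of_nonneg_left (by positivity) (by norm_num) hcc
  rw [lam_mod k]
  have h0 : 0 ≤ k % 7 := Int.emod_nonneg k (by norm_num)
  have h1 : k % 7 < 7 := Int.emod_lt_of_pos k (by norm_num)
  interval_cases h : (k % 7)
  · rw [lamA0]
  · rw [lamA1]; exact key 50 (by norm_num)
  · rw [lamA2]; exact key 29 (by norm_num)
  · rw [lamA3]; exact key 30 (by norm_num)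
  · rw [lamA4]; exact key 45 (by norm_num)
  · rw [lamA5]; exact key 37 (by norm_num)
  · rw [lamA6]; exact key 46 (by norm_num)

theorem markov_value_1112122 :
    markov (periodize [2,1,2,2,1,1,1]) = 2 * Real.sqrt 2026 / 27 ∧
    lam (periodize [2,1,2,2,1,1,1]) 0 = 2 * Real.sqrt 2026 / 27 := by
  have hlam0 : lam A 0 = 2 * Real.sqrt 2026 / 27 := lamA0
  constructor
  · apply le_antisymm
    · exact ciSup_le lam_upper
    · rw [← hlam0]
      exact le_ciSup ⟨2*rt/27, by rintro _ ⟨k, rfl⟩; exact lam_upper k⟩ 0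
  · exact hlam0
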